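/- If C is an [n,k,d] locally recoverable code with locality b (every coordinate is recoverable from at most b other coordinates, i.e., every column of a generator matrix lies in the span of b designated other columns within its locality set of size b+1), then k - 1 + ⌊(k-1)/b⌋ ≤ n - d. -/

import Mathlib

open Module Submodule

namespace LRCaux

variable {F : Type*} [Field F] {k n : ℕ}

/-- The rank of the set of columns indexed by `S`. -/
noncomputable def rk (v : Fin n → Fin k → F) (S : Finset (Fin n)) : ℕ :=
  Module.finrank F (Submodule.span F (v '' (S : Set (Fin n))))

lemma rk_union_le (v : Fin n → Fin k → F) (S B : Finset (Fin n)) :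
    rk v (S ∪ B) ≤ rk v S + rk v B := by
  unfold rk
  rw [Finset.coe_union, Set.image_union, Submodule.span_union]
  exact Submodule.finrank_add_le_finrank_add_finrank _ _

lemma rk_le_card (v : Fin n → Fin k → F) (B : Finset (Fin n)) :
    rk v B ≤ B.card := by
  classical
  unfold rk
  rw [← Finset.coe_image]
  exact (finrank_span_finset_le_card _).trans (Finset.card_image_le)

lemma rk_mono (v : Fin n → Fin k → F) {S T : Finset (Fin n)} (h : S ⊆ T) :
    rk v S ≤ rk v T :=
  Submodule.finrank_mono (Submodule.span_mono (Set.image_mono (by exact_mod_cast h)))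

lemma rk_prefix (v : Fin n → Fin k → F) (B : Finset (Fin n)) :
    ∀ (S : Finset (Fin n)) (m : ℕ), rk v S ≤ m → m ≤ rk v (S ∪ B) →
    ∃ B' ⊆ B, rk v (S ∪ B') = m := by
  classical
  induction B using Finset.induction_on with
  | empty =>
    intro S m h1 h2
    rw [Finset.union_empty] at h2
    exact ⟨∅, Finset.Subset.refl _, by rw [Finset.union_empty]; omega⟩
  | @insert a B ha ih =>
    intro S m h1 h2
    by_cases hm : m ≤ rk v (S ∪ B)
    · obtain ⟨B', hB'B, hB'⟩ := ih S m h1 hm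
      exact ⟨B', hB'B.trans (Finset.subset_insert a B), hB'⟩
    · -- rk (S ∪ insert a B) ≤ rk (S ∪ B) + 1
      have hstep : rk v (S ∪ insert a B) ≤ rk v (S ∪ B) + 1 := by
        have h3 : S ∪ insert a B = (S ∪ B) ∪ {a} := by
          ext x; simp [Finset.mem_insert, Finset.mem_union]
        rw [h3]
        have := rk_union_le v (S ∪ B) {a}
        have h4 : rk v ({a} : Finset (Fin n)) ≤ 1 := by
          simpa using rk_le_card v {a}
        omega
      refine ⟨insert a B, Finset.Subset.refl _, ?_⟩
      omega

end LRCaux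

open LRCaux Finset in
/-- Singleton-type bound for locally recoverable codes with locality `b`:
if the coordinates of an `[n,k,d]` code (given by a rank-`k` generator matrix `G`, all
nonzero codewords of weight at least `d`) are partitioned into sets of size `b+1` on each
of which the corresponding columns of `G` have rank at most `b`, then
`k - 1 + ⌊(k-1)/b⌋ ≤ n - d`. -/
theorem lrc_singleton_bound {F : Type*} [Field F] [DecidableEq F] {n k d b : ℕ}
    (hk : 1 ≤ k) (hb : 1 ≤ b)
    (G : Matrix (Fin k) (Fin n) F)
    (hrank : G.rank = k)
    (hdist : ∀ x : Fin k → F, x ≠ 0 → d ≤ hammingNorm (Matrix.vecMul x G))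
    (P : Finset (Finset (Fin n)))
    (hpart : ∀ j : Fin n, ∃! B, B ∈ P ∧ j ∈ B)
    (hsize : ∀ B ∈ P, B.card = b + 1)
    (hloc : ∀ B ∈ P, Module.finrank F
      (Submodule.span F ((fun j : Fin n => fun i : Fin k => G i j) '' (B : Set (Fin n)))) ≤ b) :
    k - 1 + (k - 1) / b ≤ n - d := by
  classical
  set v : Fin n → Fin k → F := fun j : Fin n => fun i : Fin k => G i j with hv
  have hloc' : ∀ B ∈ P, rk v B ≤ b := hloc
  -- total column rank is k
  have hrtop : Module.finrank F (Submodule.span F (Set.range v)) = k := by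
    have : G.rank = Module.finrank F (Submodule.span F (Set.range v)) := by
      rw [Matrix.rank_eq_finrank_span_cols]; rfl
    omega
  -- Step 1: construct a large set of columns of rank ≤ k - 1
  have build : ∀ fuel : ℕ, ∀ T : Finset (Finset (Fin n)), T ⊆ P →
      (T.sup id).card = T.card * (b + 1) → rk v (T.sup id) ≤ T.card * b →
      rk v (T.sup id) ≤ k - 1 → k - 1 - rk v (T.sup id) ≤ fuel →
      ∃ S : Finset (Fin n), rk v S ≤ k - 1 ∧ k - 1 + (k - 1) / b ≤ S.card := by
    intro fuel
    induction fuel with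
    | zero =>
      intro T hTP hc hrk0 hle hf
      refine ⟨T.sup id, hle, ?_⟩
      have hdiv : (k - 1) / b ≤ T.card := by
        have h1 : k - 1 ≤ T.card * b := by omega
        calc (k - 1) / b ≤ (T.card * b) / b := Nat.div_le_div_right h1
          _ = T.card := Nat.mul_div_cancel (m := T.card) hb
      have h2 : T.card * (b + 1) = T.card * b + T.card := by ring
      omega
    | succ f ih =>
      intro T hTP hc hrk0 hle hf
      by_cases hR : rk v (T.sup id) = k - 1
      · refine ⟨T.sup id, hle, ?_⟩
        have hdiv : (k - 1) / b ≤ T.card := by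
          have h1 : k - 1 ≤ T.card * b := by omega
          calc (k - 1) / b ≤ (T.card * b) / b := Nat.div_le_div_right h1
            _ = T.card := Nat.mul_div_cancel (m := T.card) hb
        have h2 : T.card * (b + 1) = T.card * b + T.card := by ring
        omega
      · have hRlt : rk v (T.sup id) < k - 1 := lt_of_le_of_ne hle hR
        -- find a column outside the span
        have hex : ∃ j : Fin n, v j ∉ Submodule.span F (v '' ↑(T.sup id)) := by
          by_contra hcon
          push_neg at hcon
          have hle2 : Submodule.span F (Set.range v) ≤
              Submodule.span F (v '' ↑(T.sup id)) := by
            rw [Submodule.span_le]; rintro _ ⟨j, rfl⟩; exact hcon j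
          have := Submodule.finrank_mono hle2
          unfold rk at hRlt
          omega
        obtain ⟨j, hj⟩ := hex
        obtain ⟨B, ⟨hBP, hjB⟩, _⟩ := hpart j
        have hBT : B ∉ T := by
          intro hBT
          exact hj (Submodule.subset_span ⟨j, Finset.mem_coe.mpr
            (Finset.mem_sup.mpr ⟨B, hBT, hjB⟩), rfl⟩)
        have hdisj : ∀ a ∈ B, a ∉ T.sup id := by
          intro a haB haS
          obtain ⟨B', hB'T, haB'⟩ := Finset.mem_sup.mp haS
          obtain ⟨C, _, hCuniq⟩ := hpart a
          have e1 : B = C := hCuniq B ⟨hBP, haB⟩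
          have e2 : B' = C := hCuniq B' ⟨hTP hB'T, haB'⟩
          exact hBT ((e1.trans e2.symm) ▸ hB'T)
        have hsupT' : (insert B T).sup id = B ∪ T.sup id := Finset.sup_insert
        have hTP' : insert B T ⊆ P := Finset.insert_subset hBP hTP
        have hcardT' : (insert B T).card = T.card + 1 := Finset.card_insert_of_notMem hBT
        have hcard' : ((insert B T).sup id).card = (insert B T).card * (b + 1) := by
          rw [hsupT', Finset.card_union_of_disjoint (Finset.disjoint_left.mpr hdisj),
            hcardT', hsize B hBP, hc]
          ring
        have hrk' : rk v ((insert B T).sup id) ≤ (insert B T).card * b := by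
          rw [hsupT', hcardT']
          have h1 := rk_union_le v B (T.sup id)
          have h2 := hloc' B hBP
          have h3 : (T.card + 1) * b = T.card * b + b := by ring
          omega
        have hlt : rk v (T.sup id) < rk v ((insert B T).sup id) := by
          apply Submodule.finrank_lt_finrank_of_lt
          rw [hsupT']
          refine SetLike.lt_iff_le_and_exists.mpr
            ⟨Submodule.span_mono (Set.image_mono (by
              intro a ha; simp only [Finset.coe_union, Set.mem_union]
              exact Or.inr ha)), v j, ?_, hj⟩
          exact Submodule.subset_span ⟨j, by simp [hjB], rfl⟩
        by_cases hk1 : rk v ((insert B T).sup id) ≤ k - 1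
        · exact ih (insert B T) hTP' hcard' hrk' hk1 (by omega)
        · -- overshoot: take a prefix of B
          have hkge : k ≤ rk v ((insert B T).sup id) := by omega
          have hple : k - 1 ≤ rk v (T.sup id ∪ B) := by
            rw [Finset.union_comm, ← hsupT']; omega
          obtain ⟨B', hB'B, hB'rk⟩ := rk_prefix v B (T.sup id) (k - 1) hle hple
          refine ⟨T.sup id ∪ B', le_of_eq hB'rk, ?_⟩
          have hcardU : (T.sup id ∪ B').card = T.card * (b + 1) + B'.card := by
            rw [Finset.union_comm, Finset.card_union_of_disjoint
              (Finset.disjoint_left.mpr (fun a ha => hdisj a (hB'B ha))), hc]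
            ring
          have h1 : k - 1 ≤ rk v (T.sup id) + B'.card := by
            have := rk_union_le v (T.sup id) B'
            have := rk_le_card v B'
            omega
          have h2 : k ≤ rk v (T.sup id) + b := by
            have h4 := rk_union_le v B (T.sup id)
            have h5 := hloc' B hBP
            rw [hsupT'] at hkge
            omega
          have hdiv : (k - 1) / b ≤ T.card := by
            have h6 : (k - 1) / b < T.card + 1 := by
              rw [Nat.div_lt_iff_lt_mul hb]
              have h7 : (T.card + 1) * b = T.card * b + b := by ring
              omega
            omega
          have h8 : T.card * (b + 1) = T.card * b + T.card := by ring
          omega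
  have hrkempty : rk v ((∅ : Finset (Finset (Fin n))).sup id) = 0 := by
    simp [rk, Submodule.span_empty]
  have hbase1 : rk v ((∅ : Finset (Finset (Fin n))).sup id) ≤ k - 1 := by omega
  have hbase2 : k - 1 - rk v ((∅ : Finset (Finset (Fin n))).sup id) ≤ k := by omega
  obtain ⟨S, hSrk, hScard⟩ := build k ∅ (Finset.empty_subset P)
    (by simp) (by simp [rk]) hbase1 hbase2
  -- Step 2: a nonzero codeword vanishing on S
  set N : Matrix {x // x ∈ S} (Fin k) F := fun j => v (j : Fin n) with hN
  have hrangeN : Set.range N = v '' ↑S := by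
    ext y; simp [hN, Set.mem_image]
  have hNrank : N.rank = rk v S := by
    rw [Matrix.rank_eq_finrank_span_row]
    change Module.finrank F (Submodule.span F (Set.range N)) = _
    rw [hrangeN]
    rfl
  have hNnull : N.rank + Module.finrank F (LinearMap.ker N.mulVecLin) = k := by
    rw [Matrix.rank]
    simpa using LinearMap.finrank_range_add_finrank_ker N.mulVecLin
  have hkerne : LinearMap.ker N.mulVecLin ≠ ⊥ := by
    intro h
    rw [h, finrank_bot] at hNnull
    omega
  obtain ⟨x, hxker, hx0⟩ := (Submodule.ne_bot_iff _).mp hkerne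
  have hxker' : N.mulVec x = 0 := hxker
  have hcS : ∀ j ∈ S, Matrix.vecMul x G j = 0 := by
    intro j hjS
    have h0 : N.mulVec x ⟨j, hjS⟩ = 0 := by rw [hxker']; rfl
    rw [show Matrix.vecMul x G j = N.mulVec x ⟨j, hjS⟩ by
      simp [Matrix.mulVec, Matrix.vecMul, dotProduct, hN, hv, mul_comm], h0]
  have hcd : d ≤ hammingNorm (Matrix.vecMul x G) := hdist x hx0
  -- weight bound
  have hwt : hammingNorm (Matrix.vecMul x G) + S.card ≤ n := by
    set c := Matrix.vecMul x G with hc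
    have hd : Disjoint ({i | c i ≠ 0} : Finset (Fin n)) S := by
      rw [Finset.disjoint_left]
      intro a ha haS
      simp only [Finset.mem_filter] at ha
      exact absurd (hcS a haS) ha.2
    have h1 : hammingNorm c + S.card = (({i | c i ≠ 0} : Finset (Fin n)) ∪ S).card := by
      rw [Finset.card_union_of_disjoint hd]; rfl
    rw [h1]
    exact (Finset.card_le_univ _).trans (by simp)
  have hkle : N.rank ≤ k - 1 := by omega
  omega
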